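/- For any family 𝓐 of nonempty sets there exists a family of sets 𝓑 such that ci(𝓑) = 𝓑 ∪ 𝓐, where ci(𝓑) is the set of nonempty intersections of nonempty ⊆-chains from 𝓑. Concretely, choosing pairwise disjoint countable sets E(A) = {e_{A,n} : n ∈ ℕ} disjoint from all members of 𝓐, and setting Eₙ(A) = A ∪ {e_{A,i} : i ≥ n} and 𝓑 = {Eₙ(A) : n ∈ ℕ, A ∈ 𝓐}, one has ci(𝓑) = 𝓑 ∪ 𝓐. -/
import Mathlib


/-- `ci 𝓑` is the collection of all nonempty intersections of nonempty
inclusion-chains of members of `𝓑`. -/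
def ci {X : Type*} (B : Set (Set X)) : Set (Set X) :=
  {I | I.Nonempty ∧ ∃ C ⊆ B, C.Nonempty ∧ IsChain (· ⊆ ·) C ∧ I = ⋂₀ C}

/-- For a family `𝓐` of nonempty sets, with pairwise disjoint countable sets of new
elements `e_{A,n}` avoiding all members of `𝓐`, setting
`Eₙ(A) = A ∪ {e_{A,i} : i ≥ n}` and `𝓑 = {Eₙ(A)}`, one has `ci 𝓑 = 𝓑 ∪ 𝓐`. -/
theorem ci_eq_union {α : Type*} (A : Set (Set α)) (hA : ∀ a ∈ A, a.Nonempty)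
    (e : Set α → ℕ → α)
    (havoid : ∀ a ∈ A, ∀ n : ℕ, e a n ∉ ⋃₀ A)
    (hinj : ∀ a ∈ A, ∀ b ∈ A, ∀ n m : ℕ, e a n = e b m → a = b ∧ n = m) :
    ci {s | ∃ a ∈ A, ∃ n : ℕ, s = a ∪ {x | ∃ i ≥ n, x = e a i}} =
      {s | ∃ a ∈ A, ∃ n : ℕ, s = a ∪ {x | ∃ i ≥ n, x = e a i}} ∪ A := by
  set E : Set α → ℕ → Set α := fun a n => a ∪ {x | ∃ i ≥ n, x = e a i} with hEdef
  have hEmem : ∀ (a : Set α) (n i : ℕ), n ≤ i → e a i ∈ E a n := by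
    intro a n i h; exact Or.inr ⟨i, h, rfl⟩
  have hnot : ∀ a ∈ A, ∀ i : ℕ, e a i ∉ a := by
    intro a ha i h; exact havoid a ha i ⟨a, ha, h⟩
  have hmono : ∀ (a : Set α) (n m : ℕ), m ≤ n → E a n ⊆ E a m := by
    intro a n m h x hx
    rcases hx with hx | ⟨i, hi, rfl⟩
    · exact Or.inl hx
    · exact Or.inr ⟨i, le_trans h hi, rfl⟩
  have hsub : ∀ a ∈ A, a ⊆ E a 0 := fun a _ x hx => Or.inl hx
  -- subset relation forces same base set
  have hsame : ∀ a ∈ A, ∀ b ∈ A, ∀ n m : ℕ, E a n ⊆ E b m → a = b := by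
    intro a ha b hb n m h
    have := h (hEmem a n n le_rfl)
    rcases this with hx | ⟨j, _, hj⟩
    · exact absurd ⟨b, hb, hx⟩ (havoid a ha n)
    · exact (hinj a ha b hb n j hj).1
  -- intersection of all E a n is a
  have hInter : ∀ a ∈ A, ∀ x, (∀ n, x ∈ E a n) → x ∈ a := by
    intro a ha x hx
    rcases hx 0 with h | ⟨i, _, rfl⟩
    · exact h
    · rcases hx (i + 1) with h | ⟨j, hj, hej⟩
      · exact absurd h (hnot a ha i)
      · have := (hinj a ha a ha i j hej).2
        omega
  ext s
  constructor
  · rintro ⟨hsne, C, hCB, ⟨c0, hc0⟩, hchain, rfl⟩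
    obtain ⟨a, ha, n0, hc0eq'⟩ := hCB hc0
    have hc0eq : c0 = E a n0 := hc0eq'
    -- every member of C is E a n for some n
    have hall : ∀ c ∈ C, ∃ n, c = E a n := by
      intro c hc
      obtain ⟨b, hb, m, hceq'⟩ := hCB hc
      have hceq : c = E b m := hceq'
      rcases eq_or_ne c c0 with rfl | hne
      · exact ⟨n0, hc0eq⟩
      · rcases hchain hc hc0 hne with h | h
        · have : b = a := hsame b hb a ha m n0 (by rw [← hceq, ← hc0eq]; exact h)
          exact ⟨m, by rw [hceq, this]⟩
        · have : a = b := hsame a ha b hb n0 m (by rw [← hceq, ← hc0eq]; exact h)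
          exact ⟨m, by rw [hceq, this]⟩
    classical
    by_cases hbdd : ∃ N, ∀ m, E a m ∈ C → m ≤ N
    · obtain ⟨N0, hN0⟩ := hbdd
      set P : ℕ → Prop := fun m => E a m ∈ C with hP
      have hn0C : E a n0 ∈ C := by rw [← hc0eq]; exact hc0
      have hn0N0 : n0 ≤ N0 := hN0 n0 hn0C
      have hNC : E a (Nat.findGreatest P N0) ∈ C :=
        Nat.findGreatest_spec (P := P) hn0N0 hn0C
      have hNmax : ∀ n, E a n ∈ C → n ≤ Nat.findGreatest P N0 := by
        intro n hn; exact Nat.le_findGreatest (hN0 n hn) hn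
      set N := Nat.findGreatest P N0
      left
      refine ⟨a, ha, N, ?_⟩
      apply subset_antisymm
      · intro x hx; exact hx _ hNC
      · intro x hx c hc
        obtain ⟨n, rfl⟩ := hall c hc
        exact hmono a N n (hNmax n hc) hx
    · -- unbounded case: intersection is a
      right
      have key : ⋂₀ C = a := by
        apply subset_antisymm
        · intro x hx
          apply hInter a ha
          intro n
          -- find m ≥ n with E a m ∈ C
          push_neg at hbdd
          obtain ⟨m, hmC, hnm⟩ := hbdd n
          exact hmono a m n hnm.le (hx _ hmC)
        · intro x hx c hc
          obtain ⟨n, rfl⟩ := hall c hc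
          exact Or.inl hx
      rw [key]; exact ha
  · rintro (⟨a, ha, n, rfl⟩ | hsA)
    · refine ⟨⟨(hA a ha).some, Or.inl (hA a ha).some_mem⟩, {E a n}, ?_, ⟨_, rfl⟩, ?_, ?_⟩
      · rintro c rfl; exact ⟨a, ha, n, rfl⟩
      · exact Set.subsingleton_singleton.isChain
      · rw [Set.sInter_singleton]
    · refine ⟨hA s hsA, Set.range (E s), ?_, ⟨E s 0, 0, rfl⟩, ?_, ?_⟩
      · rintro c ⟨n, rfl⟩; exact ⟨s, hsA, n, rfl⟩
      · rintro _ ⟨n, rfl⟩ _ ⟨m, rfl⟩ _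
        rcases le_total n m with h | h
        · exact Or.inr (hmono s m n h)
        · exact Or.inl (hmono s n m h)
      · apply subset_antisymm
        · intro x hx t ht
          obtain ⟨n, rfl⟩ := ht
          exact Or.inl hx
        · intro x hx
          exact hInter s hsA x fun n => hx _ ⟨n, rfl⟩
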